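/- Let ϑ with ϑ_0 = 0 be strictly increasing and tend to infinity, and let γ be positive tending to 0. Suppose there exists q ∈ A with R(q; ϑ, γ) < ∞. Let γ' be the lower hull of γ relative to ϑ, with slopes θ_i = (γ'_{i+1} − γ'_i)/(ϑ_{i+1} − ϑ_i), and set q*_i = √(θ_i/θ_0). Then q* ∈ A, q* minimizes R(·; ϑ, γ) over A, and R(q*; ϑ, γ) = ( ∑_{i=0}^∞ √((γ'_i − γ'_{i+1})(ϑ_{i+1} − ϑ_i)) )², the series being convergent. -/

import Mathlib

open Filter
open scoped ENNReal

/-- The set `A` of probability weight sequences. -/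
def memA (q : ℕ → ℝ) : Prop :=
  q 0 = 1 ∧ (∀ i, q (i + 1) ≤ q i) ∧ (∀ i, 0 < q i) ∧ Tendsto q atTop (nhds 0)

/-- `R(q; ϑ, γ)`, the limit (supremum) of the nondecreasing sequence of products
`(∑_{i=0}^n q_i (ϑ_{i+1} - ϑ_i)) (γ_0 + ∑_{i=1}^n (1/q_i - 1/q_{i-1}) γ_i)`,
as an element of `[0, ∞]`. -/
noncomputable def Rlim (q ϑ γ : ℕ → ℝ) : ℝ≥0∞ :=
  ⨆ n : ℕ, ENNReal.ofReal
    ((∑ i ∈ Finset.range (n + 1), q i * (ϑ (i + 1) - ϑ i)) *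
      (γ 0 + ∑ i ∈ Finset.Icc 1 n, (1 / q i - 1 / q (i - 1)) * γ i))

/-- The slope sequence of `γ'` relative to the abscissae `ϑ`. -/
noncomputable def slopeSeq (ϑ γ' : ℕ → ℝ) : ℕ → ℝ :=
  fun i => (γ' (i + 1) - γ' i) / (ϑ (i + 1) - ϑ i)

/-- The max of two slope-monotone sequences is slope-monotone. -/
lemma maxSlope (ϑ a b : ℕ → ℝ) (hϑ : StrictMono ϑ)
    (ha : Monotone (slopeSeq ϑ a)) (hb : Monotone (slopeSeq ϑ b)) :
    Monotone (slopeSeq ϑ fun k => max (a k) (b k)) := by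
  have hd : ∀ i : ℕ, 0 < ϑ (i+1) - ϑ i := fun i => sub_pos.2 (hϑ (Nat.lt_succ_self i))
  apply monotone_nat_of_le_succ
  intro k
  have Ha := (div_le_div_iff₀ (hd k) (hd (k+1))).1 (ha (Nat.le_succ k))
  have Hb := (div_le_div_iff₀ (hd k) (hd (k+1))).1 (hb (Nat.le_succ k))
  show (max (a (k+1)) (b (k+1)) - max (a k) (b k)) / (ϑ (k+1) - ϑ k)
      ≤ (max (a (k+1+1)) (b (k+1+1)) - max (a (k+1)) (b (k+1))) / (ϑ (k+1+1) - ϑ (k+1))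
  rw [div_le_div_iff₀ (hd k) (hd (k+1))]
  rcases max_cases (a (k+1)) (b (k+1)) with ⟨hm, _⟩ | ⟨hm, _⟩ <;> rw [hm]
  · nlinarith [le_max_left (a k) (b k), le_max_left (a (k+1+1)) (b (k+1+1)), hd k, hd (k+1)]
  · nlinarith [le_max_right (a k) (b k), le_max_right (a (k+1+1)) (b (k+1+1)), hd k, hd (k+1)]

theorem stmt_17 (ϑ γ γ' : ℕ → ℝ)
    (hϑ0 : ϑ 0 = 0) (hϑmono : StrictMono ϑ)
    (hϑtop : Tendsto ϑ atTop atTop)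
    (hγpos : ∀ n, 0 < γ n) (hγlim : Tendsto γ atTop (nhds 0))
    (hex : ∃ q, memA q ∧ Rlim q ϑ γ ≠ ⊤)
    -- `γ'` is the lower convex hull of `γ` relative to `ϑ`.
    (hle : ∀ n, γ' n ≤ γ n)
    (hslope : Monotone (slopeSeq ϑ γ'))
    (hmax : ∀ δ : ℕ → ℝ, (∀ n, δ n ≤ γ n) → Monotone (slopeSeq ϑ δ) →
      ∀ n, δ n ≤ γ' n) :
    memA (fun i => Real.sqrt (slopeSeq ϑ γ' i / slopeSeq ϑ γ' 0)) ∧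
      (∀ q, memA q →
        Rlim (fun i => Real.sqrt (slopeSeq ϑ γ' i / slopeSeq ϑ γ' 0)) ϑ γ ≤
          Rlim q ϑ γ) ∧
      Summable (fun i =>
        Real.sqrt ((γ' i - γ' (i + 1)) * (ϑ (i + 1) - ϑ i))) ∧
      Rlim (fun i => Real.sqrt (slopeSeq ϑ γ' i / slopeSeq ϑ γ' 0)) ϑ γ =
        ENNReal.ofReal
          ((∑' i : ℕ, Real.sqrt ((γ' i - γ' (i + 1)) * (ϑ (i + 1) - ϑ i))) ^ 2) := by
  set θ : ℕ → ℝ := slopeSeq ϑ γ' with hθdef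
  have hd : ∀ i : ℕ, 0 < ϑ (i+1) - ϑ i := fun i => sub_pos.2 (hϑmono (Nat.lt_succ_self i))
  have hϑnonneg : ∀ i, 0 ≤ ϑ i := fun i => hϑ0 ▸ hϑmono.monotone (Nat.zero_le i)
  have hstep : ∀ i, γ' (i+1) - γ' i = θ i * (ϑ (i+1) - ϑ i) := by
    intro i
    rw [hθdef]; simp only [slopeSeq]
    rw [div_mul_cancel₀ _ (hd i).ne']
  have hmono1 : ∀ j : ℕ, θ j ≤ θ (j + 1) := fun j => hslope (Nat.le_succ j)
  -- γ' is nonnegative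
  have hγ'nonneg : ∀ n, 0 ≤ γ' n := by
    have hmono : Monotone (slopeSeq ϑ fun _ => (0:ℝ)) := by
      have h0 : (slopeSeq ϑ fun _ => (0:ℝ)) = fun _ => 0 := by
        funext i; simp [slopeSeq]
      rw [h0]; exact monotone_const
    exact hmax (fun _ => 0) (fun n => (hγpos n).le) hmono
  -- γ' tends to 0
  have hγ'lim : Tendsto γ' atTop (nhds 0) :=
    tendsto_of_tendsto_of_tendsto_of_le_of_le tendsto_const_nhds hγlim hγ'nonneg hle
  -- slopes are nonpositive
  have hθnonpos : ∀ i, θ i ≤ 0 := by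
    intro N; by_contra hcon; push_neg at hcon
    have key : ∀ k, θ N * (ϑ (N+k) - ϑ N) + γ' N ≤ γ' (N+k) := by
      intro k; induction k with
      | zero => simp
      | succ k ih =>
        have h1 := hstep (N+k)
        have h2 : θ N * (ϑ (N+k+1) - ϑ (N+k)) ≤ θ (N+k) * (ϑ (N+k+1) - ϑ (N+k)) :=
          mul_le_mul_of_nonneg_right (hslope (Nat.le_add_right N k)) (hd (N+k)).le
        rw [show N+(k+1) = N+k+1 from rfl]
        nlinarith [hd (N+k)]
    have h1 : ∀ᶠ n in atTop, γ n < 1 := hγlim.eventually (gt_mem_nhds one_pos)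
    have h2 : ∀ᶠ n in atTop, ϑ N + 1/θ N < ϑ n := hϑtop.eventually_gt_atTop _
    obtain ⟨m, hm⟩ := ((h1.and h2).and (eventually_ge_atTop N)).exists
    obtain ⟨⟨hm1, hm2⟩, hm3⟩ := hm
    have hkey := key (m - N)
    rw [Nat.add_sub_cancel' hm3] at hkey
    have h4 : (1:ℝ) < θ N * (ϑ m - ϑ N) := by
      have h5 : 1/θ N < ϑ m - ϑ N := by linarith
      have := mul_lt_mul_of_pos_left h5 hcon
      rwa [mul_one_div_cancel hcon.ne'] at this
    have h6 := hle m
    have h7 := hγ'nonneg N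
    linarith
  -- slopes tend to 0
  have hθbig : ∀ ε : ℝ, 0 < ε → ∃ N, -ε < θ N := by
    intro ε hε; by_contra hcon; push_neg at hcon
    have key : ∀ n, γ' n ≤ γ' 0 - ε * ϑ n := by
      intro n; induction n with
      | zero => simp [hϑ0]
      | succ n ih =>
        have h1 := hstep n
        have h2 : θ n * (ϑ (n+1) - ϑ n) ≤ -ε * (ϑ (n+1) - ϑ n) :=
          mul_le_mul_of_nonneg_right (hcon n) (hd n).le
        nlinarith [hd n]
    obtain ⟨m, hm⟩ := (hϑtop.eventually_gt_atTop (γ' 0 / ε)).exists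
    have hkey := key m
    rw [div_lt_iff₀ hε] at hm
    have := hγ'nonneg m
    nlinarith
  have hθtend : Tendsto θ atTop (nhds 0) := by
    rw [Metric.tendsto_atTop]
    intro ε hε
    obtain ⟨N, hN⟩ := hθbig ε hε
    refine ⟨N, fun n hn => ?_⟩
    have h1 : -ε < θ n := lt_of_lt_of_le hN (hslope hn)
    have h2 := hθnonpos n
    rw [Real.dist_eq, sub_zero, abs_of_nonpos h2]
    linarith
  -- γ' 0 = γ 0
  have hγ'0 : γ' 0 = γ 0 := by
    refine le_antisymm (hle 0) ?_
    set δ : ℕ → ℝ := fun k => if k = 0 then γ 0 else 0 with hδdef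
    have hs : ∀ i, slopeSeq ϑ δ i = if i = 0 then -γ 0 / (ϑ 1 - ϑ 0) else 0 := by
      intro i
      match i with
      | 0 => simp [slopeSeq, hδdef]
      | (j+1) => simp [slopeSeq, hδdef]
    have hmono : Monotone (slopeSeq ϑ δ) := by
      apply monotone_nat_of_le_succ
      intro i
      rw [hs i, hs (i+1)]
      match i with
      | 0 =>
        simp only [if_pos rfl, if_neg (Nat.succ_ne_zero 0)]
        apply div_nonpos_of_nonpos_of_nonneg (by linarith [hγpos 0]) (by linarith [hd 0, hϑ0])
      | (j+1) => simp
    have hδγ : ∀ n, δ n ≤ γ n := by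
      intro n
      match n with
      | 0 => simp [hδdef]
      | (j+1) => simpa [hδdef] using (hγpos (j+1)).le
    have := hmax δ hδγ hmono 0
    simpa [hδdef] using this
  -- slopes are strictly negative
  have hθneg : ∀ i, θ i < 0 := by
    intro N; by_contra hcon; push_neg at hcon
    have hθN : θ N = 0 := le_antisymm (hθnonpos N) hcon
    have hconst : ∀ k, γ' (N + k) = γ' N := by
      intro k; induction k with
      | zero => rfl
      | succ k ih =>
        have h1 := hstep (N + k)
        have h2 : θ (N + k) = 0 :=
          le_antisymm (hθnonpos _) (hθN ▸ hslope (Nat.le_add_right N k))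
        rw [show N+(k+1) = N+k+1 from rfl]
        rw [h2] at h1
        linarith
    have hγN : γ' N = 0 := by
      have h1 : Tendsto (fun k => γ' (N + k)) atTop (nhds 0) := by
        have := hγ'lim.comp (tendsto_add_atTop_nat N)
        simpa [Function.comp_def, Nat.add_comm] using this
      have h2 : Tendsto (fun k => γ' (N + k)) atTop (nhds (γ' N)) := by
        simp only [hconst]; exact tendsto_const_nhds
      exact tendsto_nhds_unique h2 h1
    -- construct a better minorant
    have hT : 0 < ϑ (N+1) := hϑ0 ▸ hϑmono (Nat.succ_pos N)
    set ε : ℝ := (Finset.range (N+1)).inf' ⟨0, Finset.mem_range.2 (Nat.succ_pos N)⟩ γ with hεdef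
    have hεpos : 0 < ε := by
      rw [hεdef]
      exact (Finset.lt_inf'_iff _).2 fun i _ => hγpos i
    have hεle : ∀ k ≤ N, ε ≤ γ k := by
      intro k hk
      exact Finset.inf'_le γ (Finset.mem_range.2 (Nat.lt_succ_of_le hk))
    set aff : ℕ → ℝ := fun k => ε * (1 - ϑ k / ϑ (N+1)) with haffdef
    have haffle : ∀ k, aff k ≤ γ k := by
      intro k
      rcases le_or_gt k N with hk | hk
      · have h1 : 0 ≤ ϑ k / ϑ (N+1) := div_nonneg (hϑnonneg k) hT.le
        have h2 : aff k ≤ ε := by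
          rw [haffdef]; nlinarith
        exact h2.trans (hεle k hk)
      · have h1 : ϑ (N+1) ≤ ϑ k := hϑmono.monotone hk
        have h2 : (1:ℝ) ≤ ϑ k / ϑ (N+1) := (one_le_div hT).2 h1
        have h3 : aff k ≤ 0 := by rw [haffdef]; nlinarith
        exact h3.trans (hγpos k).le
    have haffslope : Monotone (slopeSeq ϑ aff) := by
      have h0 : slopeSeq ϑ aff = fun _ => -(ε / ϑ (N+1)) := by
        funext i
        simp only [slopeSeq, haffdef]
        rw [div_eq_iff (hd i).ne']
        field_simp
        ring
      rw [h0]; exact monotone_const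
    have hδmono : Monotone (slopeSeq ϑ fun k => max (γ' k) (aff k)) :=
      maxSlope ϑ γ' aff hϑmono hslope haffslope
    have hδle : ∀ n, max (γ' n) (aff n) ≤ γ n := fun n => max_le (hle n) (haffle n)
    have := hmax _ hδle hδmono N
    have haffN : 0 < aff N := by
      have h1 : ϑ N < ϑ (N+1) := hϑmono (Nat.lt_succ_self N)
      have h2 : ϑ N / ϑ (N+1) < 1 := (div_lt_one hT).2 h1
      rw [haffdef]; nlinarith
    have := le_trans (le_max_right (γ' N) (aff N)) this
    rw [hγN] at this
    linarith
  -- the kink lemma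
  have hkink : ∀ i : ℕ, θ i < θ (i+1) → γ' (i+1) = γ (i+1) := by
    intro i hlt
    by_contra hne
    have hlt2 : γ' (i+1) < γ (i+1) := lt_of_le_of_ne (hle _) hne
    set ε : ℝ := min (γ (i+1) - γ' (i+1))
      ((θ (i+1) - θ i) * min (ϑ (i+1) - ϑ i) (ϑ (i+1+1) - ϑ (i+1)) / 2) with hεdef
    have hεpos : 0 < ε := by
      rw [hεdef]
      exact lt_min (by linarith)
        (div_pos (mul_pos (by linarith) (lt_min (hd i) (hd (i+1)))) two_pos)
    have hεd1 : ε / (ϑ (i+1) - ϑ i) ≤ (θ (i+1) - θ i) / 2 := by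
      rw [div_le_iff₀ (hd i)]
      have h1 : ε ≤ (θ (i+1) - θ i) * min (ϑ (i+1) - ϑ i) (ϑ (i+1+1) - ϑ (i+1)) / 2 :=
        min_le_right _ _
      nlinarith [min_le_left (ϑ (i+1) - ϑ i) (ϑ (i+1+1) - ϑ (i+1)), hd i, hd (i+1),
        sub_pos.2 hlt]
    have hεd2 : ε / (ϑ (i+1+1) - ϑ (i+1)) ≤ (θ (i+1) - θ i) / 2 := by
      rw [div_le_iff₀ (hd (i+1))]
      have h1 : ε ≤ (θ (i+1) - θ i) * min (ϑ (i+1) - ϑ i) (ϑ (i+1+1) - ϑ (i+1)) / 2 :=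
        min_le_right _ _
      nlinarith [min_le_right (ϑ (i+1) - ϑ i) (ϑ (i+1+1) - ϑ (i+1)), hd i, hd (i+1),
        sub_pos.2 hlt]
    set δ : ℕ → ℝ := fun k => if k = i+1 then γ' (i+1) + ε else γ' k with hδdef
    have hsδ : ∀ k, slopeSeq ϑ δ k
        = θ k + (if k = i then ε / (ϑ (i+1) - ϑ i) else 0)
            - (if k = i+1 then ε / (ϑ (i+1+1) - ϑ (i+1)) else 0) := by
      intro k
      rw [hθdef]
      simp only [slopeSeq, hδdef]
      rcases eq_or_ne k i with rfl | hki
      · rw [if_pos rfl, if_neg (by omega), if_pos rfl, if_neg (by omega)]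
        rw [sub_zero, ← add_div]
        ring_nf
      · rcases eq_or_ne k (i+1) with rfl | hki1
        · rw [if_neg (by omega), if_pos rfl, if_neg (by omega), if_pos rfl]
          rw [add_zero, ← sub_div]
          ring_nf
        · rw [if_neg (by omega), if_neg hki1, if_neg hki, if_neg hki1]
          rw [add_zero, sub_zero]
    have hδmono : Monotone (slopeSeq ϑ δ) := by
      apply monotone_nat_of_le_succ
      intro k
      rw [hsδ k, hsδ (k+1)]
      have hk1 : θ k ≤ θ (k+1) := hslope (Nat.le_succ k)
      have hk2 : θ (k+1) ≤ θ (k+1+1) := hslope (Nat.le_succ (k+1))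
      have hnn1 : 0 ≤ ε / (ϑ (i+1) - ϑ i) := div_nonneg hεpos.le (hd i).le
      have hnn2 : 0 ≤ ε / (ϑ (i+1+1) - ϑ (i+1)) := div_nonneg hεpos.le (hd (i+1)).le
      rcases lt_trichotomy k i with hki | rfl | hki
      · rw [if_neg (by omega : ¬ k = i), if_neg (by omega : ¬ k = i + 1),
          if_neg (by omega : ¬ k + 1 = i + 1)]
        rcases eq_or_ne (k+1) i with hk1i | hk1i
        · rw [if_pos hk1i]; linarith
        · rw [if_neg hk1i]; linarith
      · rw [if_pos (rfl : k = k), if_neg (by omega : ¬ k = k + 1),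
          if_neg (by omega : ¬ k + 1 = k), if_pos (rfl : k + 1 = k + 1)]
        linarith
      · rw [if_neg (by omega : ¬ k = i), if_neg (by omega : ¬ k + 1 = i),
          if_neg (by omega : ¬ k + 1 = i + 1)]
        rcases eq_or_ne k (i+1) with rfl | hki1
        · rw [if_pos (rfl : i + 1 = i + 1)]; linarith
        · rw [if_neg hki1]; linarith
    have he : δ (i+1) = γ' (i+1) + ε := by simp [hδdef]
    have hδle : ∀ n, δ n ≤ γ n := by
      intro n
      rcases eq_or_ne n (i+1) with rfl | hn
      · rw [he]
        have := min_le_left (γ (i+1) - γ' (i+1))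
          ((θ (i+1) - θ i) * min (ϑ (i+1) - ϑ i) (ϑ (i+1+1) - ϑ (i+1)) / 2)
        rw [← hεdef] at this
        linarith
      · have he2 : δ n = γ' n := by simp [hδdef, hn]
        rw [he2]; exact hle n
    have hfin := hmax δ hδle hδmono (i+1)
    rw [he] at hfin
    linarith
  -- Abel summation identity
  have habel : ∀ q : ℕ → ℝ, q 0 = 1 → (∀ i, 0 < q i) → ∀ n,
      γ' 0 + ∑ i ∈ Finset.Icc 1 n, (1/q i - 1/q (i-1)) * γ' i
        = γ' n / q n + ∑ i ∈ Finset.range n, (γ' i - γ' (i+1)) / q i := by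
    intro q hq0 hqpos n
    induction n with
    | zero => simp [hq0]
    | succ n ih =>
      rw [Finset.sum_Icc_succ_top (Nat.succ_le_succ (Nat.zero_le n)), ← add_assoc, ih,
        Finset.sum_range_succ]
      have e : n + 1 - 1 = n := rfl
      rw [e]
      have h1 := (hqpos n).ne'
      have h2 := (hqpos (n+1)).ne'
      field_simp
      ring
  -- the nonnegative quantities
  set P : ℕ → ℝ := fun i => Real.sqrt ((γ' i - γ' (i + 1)) * (ϑ (i + 1) - ϑ i)) with hPdef
  have hP2 : ∀ i, γ' i - γ' (i+1) = (-θ i) * (ϑ (i+1) - ϑ i) := by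
    intro i; have := hstep i; linarith
  have hdiffnn : ∀ i, 0 ≤ γ' i - γ' (i+1) := by
    intro i; rw [hP2 i]
    exact mul_nonneg (neg_nonneg.2 (hθnonpos i)) (hd i).le
  have hPnn : ∀ i, 0 ≤ P i := fun i => Real.sqrt_nonneg _
  -- the T-part lower bound via Abel
  have hTbound : ∀ q : ℕ → ℝ, q 0 = 1 → (∀ i, q (i+1) ≤ q i) → (∀ i, 0 < q i) → ∀ n,
      ∑ i ∈ Finset.range n, (γ' i - γ' (i+1)) / q i
        ≤ γ 0 + ∑ i ∈ Finset.Icc 1 n, (1/q i - 1/q (i-1)) * γ i := by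
    intro q hq0 hqmono hqpos n
    have hab := habel q hq0 hqpos n
    have hcoef : ∀ i ∈ Finset.Icc 1 n, (1/q i - 1/q (i-1)) * γ' i
        ≤ (1/q i - 1/q (i-1)) * γ i := by
      intro i hi
      obtain ⟨h1i, _⟩ := Finset.mem_Icc.1 hi
      obtain ⟨j, rfl⟩ : ∃ j, i = j + 1 := ⟨i - 1, by omega⟩
      have e : j + 1 - 1 = j := rfl
      rw [e]
      have hc : 0 ≤ 1/q (j+1) - 1/q j := by
        have h1 := one_div_le_one_div_of_le (hqpos (j+1)) (hqmono j)
        linarith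
      exact mul_le_mul_of_nonneg_left (hle _) hc
    have hsum := Finset.sum_le_sum hcoef
    have h0 : 0 ≤ γ' n / q n := div_nonneg (hγ'nonneg n) (hqpos n).le
    have h1 := hγ'0
    linarith
  -- Cauchy–Schwarz chain
  have hCS : ∀ q : ℕ → ℝ, memA q → ∀ n : ℕ,
      (∑ i ∈ Finset.range n, P i)^2
        ≤ (∑ i ∈ Finset.range (n+1), q i * (ϑ (i+1) - ϑ i)) *
          (γ 0 + ∑ i ∈ Finset.Icc 1 n, (1/q i - 1/q (i-1)) * γ i) := by
    intro q hq n
    obtain ⟨hq0, hqmono, hqpos, _⟩ := hq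
    have key : (∑ i ∈ Finset.range n, P i)^2
        ≤ (∑ i ∈ Finset.range n, q i * (ϑ (i+1) - ϑ i)) *
          (∑ i ∈ Finset.range n, (γ' i - γ' (i+1)) / q i) := by
      have hcs := Finset.sum_mul_sq_le_sq_mul_sq (Finset.range n)
        (fun i => Real.sqrt (q i * (ϑ (i+1) - ϑ i)))
        (fun i => Real.sqrt ((γ' i - γ' (i+1)) / q i))
      have e1 : ∀ i, Real.sqrt (q i * (ϑ (i+1) - ϑ i)) *
          Real.sqrt ((γ' i - γ' (i+1)) / q i) = P i := by
        intro i
        have hqi := (hqpos i).ne'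
        rw [← Real.sqrt_mul (mul_nonneg (hqpos i).le (hd i).le)]
        simp only [hPdef]
        congr 1
        field_simp
      have e2 : ∀ i, Real.sqrt (q i * (ϑ (i+1) - ϑ i)) ^ 2 = q i * (ϑ (i+1) - ϑ i) :=
        fun i => Real.sq_sqrt (mul_nonneg (hqpos i).le (hd i).le)
      have e3 : ∀ i, Real.sqrt ((γ' i - γ' (i+1)) / q i) ^ 2 = (γ' i - γ' (i+1)) / q i :=
        fun i => Real.sq_sqrt (div_nonneg (hdiffnn i) (hqpos i).le)
      calc (∑ i ∈ Finset.range n, P i)^2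
          = (∑ i ∈ Finset.range n, Real.sqrt (q i * (ϑ (i+1) - ϑ i)) *
              Real.sqrt ((γ' i - γ' (i+1)) / q i))^2 := by
            congr 1; exact (Finset.sum_congr rfl fun i _ => e1 i).symm
        _ ≤ (∑ i ∈ Finset.range n, Real.sqrt (q i * (ϑ (i+1) - ϑ i)) ^ 2) *
              (∑ i ∈ Finset.range n, Real.sqrt ((γ' i - γ' (i+1)) / q i) ^ 2) := hcs
        _ = _ := by
            congr 1
            · exact Finset.sum_congr rfl fun i _ => e2 i
            · exact Finset.sum_congr rfl fun i _ => e3 i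
    have hS : (∑ i ∈ Finset.range n, q i * (ϑ (i+1) - ϑ i))
        ≤ ∑ i ∈ Finset.range (n+1), q i * (ϑ (i+1) - ϑ i) := by
      rw [Finset.sum_range_succ]
      nlinarith [mul_nonneg (hqpos n).le (hd n).le]
    have hT := hTbound q hq0 hqmono hqpos n
    have hSnn : 0 ≤ ∑ i ∈ Finset.range n, q i * (ϑ (i+1) - ϑ i) :=
      Finset.sum_nonneg fun i _ => mul_nonneg (hqpos i).le (hd i).le
    have hTnn : 0 ≤ ∑ i ∈ Finset.range n, (γ' i - γ' (i+1)) / q i :=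
      Finset.sum_nonneg fun i _ => div_nonneg (hdiffnn i) (hqpos i).le
    calc (∑ i ∈ Finset.range n, P i)^2
        ≤ (∑ i ∈ Finset.range n, q i * (ϑ (i+1) - ϑ i)) *
          (∑ i ∈ Finset.range n, (γ' i - γ' (i+1)) / q i) := key
      _ ≤ (∑ i ∈ Finset.range (n+1), q i * (ϑ (i+1) - ϑ i)) *
          (γ 0 + ∑ i ∈ Finset.Icc 1 n, (1/q i - 1/q (i-1)) * γ i) := by
          apply mul_le_mul hS hT hTnn
          exact le_trans hSnn hS
  -- each partial square is dominated by every Rlim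
  have hRle : ∀ q : ℕ → ℝ, memA q → ∀ n : ℕ,
      ENNReal.ofReal ((∑ i ∈ Finset.range n, P i)^2) ≤ Rlim q ϑ γ := by
    intro q hq n
    refine le_trans (ENNReal.ofReal_le_ofReal (hCS q hq n)) ?_
    rw [Rlim]
    exact le_iSup (fun n => ENNReal.ofReal
      ((∑ i ∈ Finset.range (n + 1), q i * (ϑ (i + 1) - ϑ i)) *
        (γ 0 + ∑ i ∈ Finset.Icc 1 n, (1 / q i - 1 / q (i - 1)) * γ i))) n
  -- summability
  obtain ⟨q₀, hq₀A, hq₀fin⟩ := hex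
  have hbound : ∀ n, ∑ i ∈ Finset.range n, P i ≤ Real.sqrt ((Rlim q₀ ϑ γ).toReal) := by
    intro n
    have h1 := (ENNReal.ofReal_le_iff_le_toReal hq₀fin).1 (hRle q₀ hq₀A n)
    have h2 : ∑ i ∈ Finset.range n, P i
        = Real.sqrt ((∑ i ∈ Finset.range n, P i)^2) :=
      (Real.sqrt_sq (Finset.sum_nonneg fun i _ => hPnn i)).symm
    rw [h2]
    exact Real.sqrt_le_sqrt h1
  have hsum : Summable P := summable_of_sum_range_le hPnn hbound
  set σ : ℝ := ∑' i, P i with hσdef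
  have hσtend : Tendsto (fun n => ∑ i ∈ Finset.range n, P i) atTop (nhds σ) :=
    hsum.hasSum.tendsto_sum_nat
  have hσle : ∀ n, ∑ i ∈ Finset.range n, P i ≤ σ :=
    fun n => Summable.sum_le_tsum _ (fun i _ => hPnn i) hsum
  have hσnn : 0 ≤ σ := tsum_nonneg hPnn
  -- lower bound for all q ∈ A
  have hlow : ∀ q : ℕ → ℝ, memA q → ENNReal.ofReal (σ^2) ≤ Rlim q ϑ γ := by
    intro q hq
    have ht : Tendsto (fun n => ENNReal.ofReal ((∑ i ∈ Finset.range n, P i)^2)) atTop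
        (nhds (ENNReal.ofReal (σ^2))) :=
      (ENNReal.continuous_ofReal.tendsto _).comp (hσtend.pow 2)
    exact le_of_tendsto ht (Eventually.of_forall (hRle q hq))
  -- the optimal sequence
  set r : ℕ → ℝ := fun i => Real.sqrt (-θ i) with hrdef
  have hrpos : ∀ i, 0 < r i := fun i => Real.sqrt_pos.2 (neg_pos.2 (hθneg i))
  have hqstar : (fun i => Real.sqrt (θ i / θ 0)) = fun i => r i / r 0 := by
    funext i
    rw [hrdef]
    rw [show θ i / θ 0 = (-θ i) / (-θ 0) by rw [neg_div_neg_eq]]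
    exact Real.sqrt_div (neg_nonneg.2 (hθnonpos i)) _
  have hrantitone : Antitone r := by
    apply antitone_nat_of_succ_le
    intro i
    exact Real.sqrt_le_sqrt (by linarith [hmono1 i])
  have hrtend : Tendsto r atTop (nhds 0) := by
    have h1 : Tendsto (fun n => Real.sqrt (-θ n)) atTop (nhds (Real.sqrt (-0))) :=
      (Real.continuous_sqrt.tendsto _).comp hθtend.neg
    simpa [hrdef] using h1
  have hqA : memA (fun i => r i / r 0) := by
    refine ⟨div_self (hrpos 0).ne', ?_, ?_, ?_⟩
    · intro i
      exact div_le_div_of_nonneg_right (hrantitone (Nat.le_succ i)) (hrpos 0).le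
    · intro i; exact div_pos (hrpos i) (hrpos 0)
    · have := hrtend.div_const (r 0)
      simpa using this
  have hrsq : ∀ i, r i * r i = -θ i :=
    fun i => Real.mul_self_sqrt (neg_nonneg.2 (hθnonpos i))
  have hPr : ∀ i, P i = r i * (ϑ (i+1) - ϑ i) := by
    intro i
    simp only [hPdef, hrdef]
    rw [hP2 i, mul_assoc, Real.sqrt_mul (neg_nonneg.2 (hθnonpos i)),
      Real.sqrt_mul_self (hd i).le]
  -- the S-part for q*
  have hSstar : ∀ n, ∑ i ∈ Finset.range (n+1), (r i / r 0) * (ϑ (i+1) - ϑ i)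
      = (∑ i ∈ Finset.range (n+1), P i) / r 0 := by
    intro n
    rw [Finset.sum_div]
    apply Finset.sum_congr rfl
    intro i _
    rw [hPr i]; ring
  -- the T-part for q*
  have hTstar : ∀ n, γ 0 + ∑ i ∈ Finset.Icc 1 n,
        (1/(r i / r 0) - 1/(r (i-1) / r 0)) * γ i
      = γ' n / (r n / r 0) + r 0 * ∑ i ∈ Finset.range n, P i := by
    intro n
    have h1 : ∑ i ∈ Finset.Icc 1 n, (1/(r i / r 0) - 1/(r (i-1) / r 0)) * γ i
        = ∑ i ∈ Finset.Icc 1 n, (1/(r i / r 0) - 1/(r (i-1) / r 0)) * γ' i := by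
      apply Finset.sum_congr rfl
      intro i hi
      obtain ⟨h1i, _⟩ := Finset.mem_Icc.1 hi
      obtain ⟨j, rfl⟩ : ∃ j, i = j + 1 := ⟨i - 1, by omega⟩
      have e : j + 1 - 1 = j := rfl
      rw [e]
      rcases eq_or_lt_of_le (hmono1 j) with heq | hlt
      · have hr : r (j+1) = r j := by simp only [hrdef]; rw [← heq]
        rw [hr]; ring
      · rw [hkink j hlt]
    have h2 := habel (fun i => r i / r 0) (div_self (hrpos 0).ne')
      (fun i => div_pos (hrpos i) (hrpos 0)) n
    rw [h1, ← hγ'0, h2]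
    congr 1
    rw [Finset.mul_sum]
    apply Finset.sum_congr rfl
    intro i _
    rw [hP2 i, ← hrsq i, hPr i]
    have h3 := (hrpos i).ne'
    have h4 := (hrpos 0).ne'
    field_simp
  -- tail bound
  have htail : ∀ n, γ' n ≤ r n * (σ - ∑ i ∈ Finset.range n, P i) := by
    intro n
    have key : ∀ m, n ≤ m → γ' n ≤ γ' m + r n * (σ - ∑ i ∈ Finset.range n, P i) := by
      intro m hm
      have htel : γ' n - γ' m = ∑ i ∈ Finset.Ico n m, (γ' i - γ' (i+1)) := by
        rw [Finset.sum_Ico_eq_sub _ hm, Finset.sum_range_sub' γ', Finset.sum_range_sub' γ']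
        ring
      have hbd : ∑ i ∈ Finset.Ico n m, (γ' i - γ' (i+1))
          ≤ r n * ∑ i ∈ Finset.Ico n m, P i := by
        rw [Finset.mul_sum]
        apply Finset.sum_le_sum
        intro i hi
        obtain ⟨hni, _⟩ := Finset.mem_Ico.1 hi
        rw [hP2 i, ← hrsq i, hPr i]
        have h1 := hrantitone hni
        have h2 : 0 ≤ (r n - r i) * (r i * (ϑ (i+1) - ϑ i)) :=
          mul_nonneg (sub_nonneg.2 h1) (mul_nonneg (hrpos i).le (hd i).le)
        nlinarith [h2]
      have hICO : ∑ i ∈ Finset.Ico n m, P i ≤ σ - ∑ i ∈ Finset.range n, P i := by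
        have h1 : ∑ i ∈ Finset.range n, P i + ∑ i ∈ Finset.Ico n m, P i
            = ∑ i ∈ Finset.range m, P i := by
          simp only [Finset.range_eq_Ico]
          exact Finset.sum_Ico_consecutive _ (Nat.zero_le n) hm
        have h2 := hσle m
        linarith
      have h3 := mul_le_mul_of_nonneg_left hICO (hrpos n).le
      linarith
    have hlim2 : Tendsto (fun m => γ' m + r n * (σ - ∑ i ∈ Finset.range n, P i)) atTop
        (nhds (0 + r n * (σ - ∑ i ∈ Finset.range n, P i))) :=
      hγ'lim.add_const _
    have := ge_of_tendsto hlim2 (eventually_atTop.2 ⟨n, key⟩)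
    linarith
  -- upper bound for q*
  have hupper : ∀ n,
      (∑ i ∈ Finset.range (n+1), (r i / r 0) * (ϑ (i+1) - ϑ i)) *
        (γ 0 + ∑ i ∈ Finset.Icc 1 n, (1/(r i / r 0) - 1/(r (i-1) / r 0)) * γ i)
      ≤ σ^2 := by
    intro n
    rw [hSstar n, hTstar n]
    have h1 : γ' n / (r n / r 0) = γ' n * r 0 / r n := by
      rw [div_div_eq_mul_div]
    have h2 : γ' n * r 0 / r n ≤ (r n * (σ - ∑ i ∈ Finset.range n, P i)) * r 0 / r n := by
      apply div_le_div_of_nonneg_right ?_ (hrpos n).le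
      exact mul_le_mul_of_nonneg_right (htail n) (hrpos 0).le
    have h3 : (r n * (σ - ∑ i ∈ Finset.range n, P i)) * r 0 / r n
        = r 0 * (σ - ∑ i ∈ Finset.range n, P i) := by
      field_simp [(hrpos n).ne']
    have hT2 : γ' n / (r n / r 0) + r 0 * ∑ i ∈ Finset.range n, P i ≤ r 0 * σ := by
      rw [h1]
      rw [h3] at h2
      nlinarith [hrpos 0]
    have hS2 : (∑ i ∈ Finset.range (n+1), P i) / r 0 ≤ σ / r 0 :=
      div_le_div_of_nonneg_right (hσle (n+1)) (hrpos 0).le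
    have hTnn : 0 ≤ γ' n / (r n / r 0) + r 0 * ∑ i ∈ Finset.range n, P i := by
      have h5 : (0:ℝ) ≤ ∑ i ∈ Finset.range n, P i :=
        Finset.sum_nonneg fun i _ => hPnn i
      have h6 := mul_nonneg (hrpos 0).le h5
      have h7 := div_nonneg (hγ'nonneg n) (div_pos (hrpos n) (hrpos 0)).le
      linarith
    have hSnn : 0 ≤ (∑ i ∈ Finset.range (n+1), P i) / r 0 :=
      div_nonneg (Finset.sum_nonneg fun i _ => hPnn i) (hrpos 0).le
    calc (∑ i ∈ Finset.range (n+1), P i) / r 0 *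
          (γ' n / (r n / r 0) + r 0 * ∑ i ∈ Finset.range n, P i)
        ≤ (σ / r 0) * (r 0 * σ) := mul_le_mul hS2 hT2 hTnn
          (div_nonneg hσnn (hrpos 0).le)
      _ = σ^2 := by field_simp [((hrpos 0).ne')]
  -- assemble
  have hfinal : Rlim (fun i => r i / r 0) ϑ γ = ENNReal.ofReal (σ^2) := by
    apply le_antisymm
    · rw [Rlim]
      apply iSup_le
      intro n
      exact ENNReal.ofReal_le_ofReal (hupper n)
    · exact hlow _ hqA
  rw [hqstar]
  exact ⟨hqA, fun q hq => hfinal ▸ hlow q hq, hsum, hfinal⟩
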